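/- Proposition 4.4. Let κ be the Markov kernel of the model and μ* a probability measure on X with μ*.bind κ = μ*. Suppose there exist open sets U, V ⊆ Y, an index i ∈ I, n ≥ 1 and c̄ > 0 such that for every y ∈ U, every j ∈ I and every measurable B ⊆ Y one has κⁿ (y,i) (B ×ˢ {j}) ≥ c̄ * volume (B ∩ V). Suppose further that there exist a measurable set X̃ ⊆ X with μ* X̃ > 0, m ≥ 1 and δ > 0 such that κᵐ x (U ×ˢ {i}) ≥ δ for every x ∈ X̃. Then μ* (B ×ˢ {j}) ≥ c̄ * δ * μ* X̃ * volume (B ∩ V) for every measurable B ⊆ Y and every j ∈ I; in particular, if V is nonempty, the absolutely continuous part of μ* with respect to ℓ̄ is nonzero, i.e. μ*.singularPart ℓ̄ ≠ μ*. -/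

import Mathlib

open MeasureTheory ENNReal ProbabilityTheory Filter

noncomputable section

/-- The one-step transition probability of the chain of post-jump locations. -/
def Ptrans {Y I' Θ : Type*} [MeasurableSpace Y] [Fintype I'] [MeasurableSpace Θ]
    (ϑ : Measure Θ) (Λ : ℝ)
    (S : I' → ℝ → Y → Y) (w : Θ → Y → Y) (p : Θ → Y → ℝ) (π' : I' → I' → Y → ℝ)
    (x : Y × I') (A : Set (Y × I')) : ℝ≥0∞ :=
  ∑ j : I', ∫⁻ θ, (∫⁻ t in Set.Ioi (0:ℝ),
      ENNReal.ofReal (Λ * Real.exp (-(Λ*t))) *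
      Set.indicator A (fun _ => (1:ℝ≥0∞)) (w θ (S x.2 t x.1), j) *
      ENNReal.ofReal (π' x.2 j (w θ (S x.2 t x.1))) *
      ENNReal.ofReal (p θ (S x.2 t x.1))) ∂ϑ

/-- The `k`-step kernel. -/
def Kpow {X : Type*} [MeasurableSpace X] (κ : Kernel X X) : ℕ → Kernel X X
  | 0 => Kernel.id
  | (k+1) => Kpow κ k ∘ₖ κ

lemma iterate_bind_apply {X : Type*} [MeasurableSpace X] (κ : Kernel X X) :
    ∀ (k : ℕ) (ν : Measure X) (A : Set X), MeasurableSet A →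
      ((fun ν : Measure X => ν.bind ⇑κ)^[k] ν) A = ∫⁻ x, Kpow κ k x A ∂ν := by
  intro k
  induction k with
  | zero =>
      intro ν A hA
      simp only [Function.iterate_zero, id_eq, Kpow, Kernel.id_apply]
      rw [lintegral_congr fun x => Measure.dirac_apply' x hA,
        lintegral_indicator hA]
      simp
  | succ k ih =>
      intro ν A hA
      rw [Function.iterate_succ_apply]
      rw [ih (ν.bind ⇑κ) A hA]
      rw [Measure.lintegral_bind κ.measurable.aemeasurable (Kernel.measurable_coe _ hA).aemeasurable]
      refine lintegral_congr fun y => ?_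
      rw [show Kpow κ (k+1) = Kpow κ k ∘ₖ κ from rfl, Kernel.comp_apply,
        Measure.bind_apply hA (Kpow κ k).measurable.aemeasurable]

lemma iterate_bind_dirac {X : Type*} [MeasurableSpace X] (κ : Kernel X X)
    (k : ℕ) (x : X) (A : Set X) (hA : MeasurableSet A) :
    ((fun ν : Measure X => ν.bind ⇑κ)^[k] (Measure.dirac x)) A = Kpow κ k x A := by
  rw [iterate_bind_apply κ k _ A hA, lintegral_dirac' _ (Kernel.measurable_coe _ hA)]

/-- **Proposition 4.4.** If some open set `U ×ˢ {i}` is `(n, ℓ_d|_V)`-small and uniformly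
accessible (in `m` steps, with probability `≥ δ`) from a set `X̃` of positive `μ*`-measure,
then the invariant measure `μ*` dominates a multiple of `ℓ_d|_V` on each fibre; in particular,
if `V ≠ ∅`, the absolutely continuous part of `μ*` w.r.t. `ℓ̄` is nontrivial. -/
theorem prop_4_4
    {d N : ℕ} (hd : 0 < d) (hN : 0 < N)
    {Θ : Type*} [MeasurableSpace Θ] (ϑ : Measure Θ) [IsFiniteMeasure ϑ]
    (Λ : ℝ) (hΛ : 0 < Λ)
    (S : Fin N → ℝ → EuclideanSpace ℝ (Fin d) → EuclideanSpace ℝ (Fin d))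
    (w : Θ → EuclideanSpace ℝ (Fin d) → EuclideanSpace ℝ (Fin d))
    (p : Θ → EuclideanSpace ℝ (Fin d) → ℝ)
    (π' : Fin N → Fin N → EuclideanSpace ℝ (Fin d) → ℝ)
    (hS_meas : ∀ i, Measurable (fun q : ℝ × EuclideanSpace ℝ (Fin d) => S i q.1 q.2))
    (hw_meas : Measurable (fun q : Θ × EuclideanSpace ℝ (Fin d) => w q.1 q.2))
    (hp_meas : Measurable (fun q : Θ × EuclideanSpace ℝ (Fin d) => p q.1 q.2))
    (hπ_meas : ∀ i j, Measurable (π' i j))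
    (hp_nonneg : ∀ θ y, 0 ≤ p θ y)
    (hp_int : ∀ y, ∫ θ, p θ y ∂ϑ = 1)
    (hπ_nonneg : ∀ i j y, 0 ≤ π' i j y)
    (hπ_sum : ∀ i y, ∑ j, π' i j y = 1)
    -- the Markov kernel of the chain
    (κ : Kernel (EuclideanSpace ℝ (Fin d) × Fin N) (EuclideanSpace ℝ (Fin d) × Fin N))
    [IsMarkovKernel κ]
    (hκ : ∀ x A, MeasurableSet A → κ x A = Ptrans ϑ Λ S w p π' x A)
    -- an invariant probability measure
    (μs : Measure (EuclideanSpace ℝ (Fin d) × Fin N)) [IsProbabilityMeasure μs]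
    (hinv : μs.bind ⇑κ = μs)
    -- the small set hypothesis
    (U V : Set (EuclideanSpace ℝ (Fin d))) (hU : IsOpen U) (hV : IsOpen V)
    (i : Fin N) (n : ℕ) (hn : 1 ≤ n) (cbar : ℝ) (hcbar : 0 < cbar)
    (hsmall : ∀ y ∈ U, ∀ j : Fin N, ∀ B : Set (EuclideanSpace ℝ (Fin d)), MeasurableSet B →
      ENNReal.ofReal cbar * volume (B ∩ V) ≤
        ((fun ν : Measure (EuclideanSpace ℝ (Fin d) × Fin N) => ν.bind ⇑κ)^[n]
          (Measure.dirac (y, i))) (B ×ˢ ({j} : Set (Fin N))))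
    -- the accessibility hypothesis
    (Xtld : Set (EuclideanSpace ℝ (Fin d) × Fin N)) (hXtld_meas : MeasurableSet Xtld)
    (hXtld_pos : 0 < μs Xtld) (m : ℕ) (hm : 1 ≤ m) (δ : ℝ) (hδ : 0 < δ)
    (hacc : ∀ x ∈ Xtld,
      ENNReal.ofReal δ ≤
        ((fun ν : Measure (EuclideanSpace ℝ (Fin d) × Fin N) => ν.bind ⇑κ)^[m]
          (Measure.dirac x)) (U ×ˢ ({i} : Set (Fin N)))) :
    (∀ B : Set (EuclideanSpace ℝ (Fin d)), MeasurableSet B → ∀ j : Fin N,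
      ENNReal.ofReal cbar * ENNReal.ofReal δ * μs Xtld * volume (B ∩ V) ≤
        μs (B ×ˢ ({j} : Set (Fin N)))) ∧
    (V.Nonempty →
      μs.singularPart
        ((volume : Measure (EuclideanSpace ℝ (Fin d))).prod Measure.count) ≠ μs) := by
  -- iterated invariance
  have hinv_iter : ∀ k, (fun ν : Measure (EuclideanSpace ℝ (Fin d) × Fin N) =>
      ν.bind ⇑κ)^[k] μs = μs := by
    intro k
    induction k with
    | zero => simp
    | succ k ih =>
        rw [Function.iterate_succ_apply]
        rw [hinv, ih]
  have hUi_meas : MeasurableSet (U ×ˢ ({i} : Set (Fin N))) :=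
    hU.measurableSet.prod (measurableSet_singleton i)
  -- accessibility gives a lower bound for μs (U ×ˢ {i})
  have key2 : ENNReal.ofReal δ * μs Xtld ≤ μs (U ×ˢ ({i} : Set (Fin N))) := by
    calc ENNReal.ofReal δ * μs Xtld = ∫⁻ _ in Xtld, ENNReal.ofReal δ ∂μs := by
          rw [setLIntegral_const]
      _ ≤ ∫⁻ x in Xtld, Kpow κ m x (U ×ˢ ({i} : Set (Fin N))) ∂μs := by
          refine setLIntegral_mono' hXtld_meas fun x hx => ?_
          rw [← iterate_bind_dirac κ m x _ hUi_meas]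
          exact hacc x hx
      _ ≤ ∫⁻ x, Kpow κ m x (U ×ˢ ({i} : Set (Fin N))) ∂μs :=
          lintegral_mono' Measure.restrict_le_self le_rfl
      _ = ((fun ν : Measure (EuclideanSpace ℝ (Fin d) × Fin N) => ν.bind ⇑κ)^[m] μs)
            (U ×ˢ ({i} : Set (Fin N))) := (iterate_bind_apply κ m μs _ hUi_meas).symm
      _ = μs (U ×ˢ ({i} : Set (Fin N))) := by rw [hinv_iter m]
  -- smallness gives the main lower bound
  have key1 : ∀ B : Set (EuclideanSpace ℝ (Fin d)), MeasurableSet B → ∀ j : Fin N,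
      ENNReal.ofReal cbar * volume (B ∩ V) * μs (U ×ˢ ({i} : Set (Fin N))) ≤
        μs (B ×ˢ ({j} : Set (Fin N))) := by
    intro B hB j
    have hBj : MeasurableSet (B ×ˢ ({j} : Set (Fin N))) :=
      hB.prod (measurableSet_singleton j)
    calc ENNReal.ofReal cbar * volume (B ∩ V) * μs (U ×ˢ ({i} : Set (Fin N)))
        = ∫⁻ _ in U ×ˢ ({i} : Set (Fin N)), ENNReal.ofReal cbar * volume (B ∩ V) ∂μs := by
          rw [setLIntegral_const]
      _ ≤ ∫⁻ x in U ×ˢ ({i} : Set (Fin N)), Kpow κ n x (B ×ˢ ({j} : Set (Fin N))) ∂μs := by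
          refine setLIntegral_mono' hUi_meas fun x hx => ?_
          obtain ⟨hx1, hx2⟩ := hx
          have hx2' : x.2 = i := hx2
          have := hsmall x.1 hx1 j B hB
          rw [iterate_bind_dirac κ n (x.1, i) _ hBj] at this
          have hxeq : ((x.1, i) : EuclideanSpace ℝ (Fin d) × Fin N) = x := by
            rw [← hx2']
          rwa [hxeq] at this
      _ ≤ ∫⁻ x, Kpow κ n x (B ×ˢ ({j} : Set (Fin N))) ∂μs :=
          lintegral_mono' Measure.restrict_le_self le_rfl
      _ = ((fun ν : Measure (EuclideanSpace ℝ (Fin d) × Fin N) => ν.bind ⇑κ)^[n] μs)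
            (B ×ˢ ({j} : Set (Fin N))) := (iterate_bind_apply κ n μs _ hBj).symm
      _ = μs (B ×ˢ ({j} : Set (Fin N))) := by rw [hinv_iter n]
  have main : ∀ B : Set (EuclideanSpace ℝ (Fin d)), MeasurableSet B → ∀ j : Fin N,
      ENNReal.ofReal cbar * ENNReal.ofReal δ * μs Xtld * volume (B ∩ V) ≤
        μs (B ×ˢ ({j} : Set (Fin N))) := by
    intro B hB j
    calc ENNReal.ofReal cbar * ENNReal.ofReal δ * μs Xtld * volume (B ∩ V)
        = ENNReal.ofReal cbar * volume (B ∩ V) * (ENNReal.ofReal δ * μs Xtld) := by ring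
      _ ≤ ENNReal.ofReal cbar * volume (B ∩ V) * μs (U ×ˢ ({i} : Set (Fin N))) :=
          mul_le_mul_right key2 _
      _ ≤ μs (B ×ˢ ({j} : Set (Fin N))) := key1 B hB j
  refine ⟨main, fun hVne hEq => ?_⟩
  set ℓ := ((volume : Measure (EuclideanSpace ℝ (Fin d))).prod (Measure.count : Measure (Fin N)))
  obtain ⟨T, hT, hT1, hT2⟩ := Measure.mutuallySingular_singularPart μs ℓ
  have hμT : μs T = 0 := by rw [← hEq]; exact hT1
  set B₀ : Set (EuclideanSpace ℝ (Fin d)) := (fun y => (y, i)) ⁻¹' T with hB₀def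
  have hB₀meas : MeasurableSet B₀ := hT.preimage (measurable_id.prodMk measurable_const)
  -- μs (B₀ ×ˢ {i}) = 0
  have hsub : B₀ ×ˢ ({i} : Set (Fin N)) ⊆ T := by
    rintro ⟨y, ι⟩ ⟨hy, hι⟩
    have : ι = i := hι
    subst this
    exact hy
  have hμB₀ : μs (B₀ ×ˢ ({i} : Set (Fin N))) = 0 :=
    le_antisymm (hμT ▸ measure_mono hsub) zero_le
  -- hence volume (B₀ ∩ V) = 0
  have h1 := main B₀ hB₀meas i
  rw [hμB₀, le_zero_iff] at h1
  have hC : ENNReal.ofReal cbar * ENNReal.ofReal δ * μs Xtld ≠ 0 := by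
    have h1 : ENNReal.ofReal cbar ≠ 0 := by simp [hcbar, hcbar.le, ENNReal.ofReal_eq_zero,
      not_le]
    have h2 : ENNReal.ofReal δ ≠ 0 := by simp [ENNReal.ofReal_eq_zero, not_le, hδ]
    exact mul_ne_zero (mul_ne_zero h1 h2) hXtld_pos.ne'
  have hBV : volume (B₀ ∩ V) = 0 := by
    rcases mul_eq_zero.1 h1 with h | h
    · exact absurd h hC
    · exact h
  -- and volume B₀ᶜ = 0
  have hsub2 : B₀ᶜ ×ˢ ({i} : Set (Fin N)) ⊆ Tᶜ := by
    rintro ⟨y, ι⟩ ⟨hy, hι⟩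
    have : ι = i := hι
    subst this
    exact hy
  have hℓ : ℓ (B₀ᶜ ×ˢ ({i} : Set (Fin N))) = 0 :=
    le_antisymm (hT2 ▸ measure_mono hsub2) zero_le
  have hvolB₀c : volume B₀ᶜ = 0 := by
    have : ℓ (B₀ᶜ ×ˢ ({i} : Set (Fin N))) = volume B₀ᶜ * Measure.count ({i} : Set (Fin N)) :=
      Measure.prod_prod _ _
    rw [this, Measure.count_singleton, mul_one] at hℓ
    exact hℓ
  have hVBc : volume (V ∩ B₀ᶜ) = 0 :=
    le_antisymm (hvolB₀c ▸ measure_mono Set.inter_subset_right) zero_le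
  have hVzero : volume V = 0 := by
    refine le_antisymm ?_ zero_le
    have : V ⊆ (B₀ ∩ V) ∪ (V ∩ B₀ᶜ) := by
      intro y hy
      by_cases h : y ∈ B₀
      · exact Or.inl ⟨h, hy⟩
      · exact Or.inr ⟨hy, h⟩
    calc volume V ≤ volume ((B₀ ∩ V) ∪ (V ∩ B₀ᶜ)) := measure_mono this
      _ ≤ volume (B₀ ∩ V) + volume (V ∩ B₀ᶜ) := measure_union_le _ _
      _ = 0 := by rw [hBV, hVBc, add_zero]
  exact absurd hVzero (hV.measure_pos volume hVne).ne'
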